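/- Suppose the Arnoldi process applied to A ∈ C^{m×m} with starting vector b runs for k_P + j steps without breakdown, giving A V_i = V_{i+1} H_{i+1,i} with range(V_i) = K_i(A,b) for i ≤ k_P + j. Let M = V_{k_P} H_{k_P+1,k_P}^* V_{k_P+1}^* + (I − V_{k_P} V_{k_P}^*). Then every iterate y_i, i ≤ j, of GMRES applied to AM y = b with zero initial guess (i.e., y_i ∈ K_i(AM, b)) lies in the Krylov subspace K_{k_P+i}(A, b). -/
import Mathlib

open Matrix Submodule

noncomputable def krylov {m : ℕ} (A : Matrix (Fin m) (Fin m) ℂ) (b : Fin m → ℂ) (k : ℕ) :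
    Submodule ℂ (Fin m → ℂ) :=
  Submodule.span ℂ (Set.range fun l : Fin k => (A ^ (l : ℕ)).mulVec b)

noncomputable def colspan {m k : ℕ} (V : Matrix (Fin m) (Fin k) ℂ) :
    Submodule ℂ (Fin m → ℂ) :=
  Submodule.span ℂ (Set.range Vᵀ)

lemma krylov_mono {m : ℕ} (A : Matrix (Fin m) (Fin m) ℂ) (b : Fin m → ℂ) {k k' : ℕ}
    (h : k ≤ k') : krylov A b k ≤ krylov A b k' := by
  apply Submodule.span_mono
  rintro x ⟨l, rfl⟩
  exact ⟨Fin.castLE h l, rfl⟩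

lemma pow_mulVec_mem_krylov {m : ℕ} (A : Matrix (Fin m) (Fin m) ℂ) (b : Fin m → ℂ) {k l : ℕ}
    (h : l < k) : (A ^ l).mulVec b ∈ krylov A b k :=
  Submodule.subset_span ⟨⟨l, h⟩, rfl⟩

lemma mulVec_mem_krylov_succ {m : ℕ} (A : Matrix (Fin m) (Fin m) ℂ) (b : Fin m → ℂ) {k : ℕ}
    {v : Fin m → ℂ} (hv : v ∈ krylov A b k) : A.mulVec v ∈ krylov A b (k + 1) := by
  induction hv using Submodule.span_induction with
  | mem x hx =>
      obtain ⟨l, rfl⟩ := hx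
      rw [Matrix.mulVec_mulVec, ← pow_succ']
      exact pow_mulVec_mem_krylov A b (by omega)
  | zero => simpa [Matrix.mulVec_zero] using Submodule.zero_mem (krylov A b (k+1))
  | add x y _ _ hx hy => rw [Matrix.mulVec_add]; exact Submodule.add_mem _ hx hy
  | smul c x _ hx => rw [Matrix.mulVec_smul]; exact Submodule.smul_mem _ c hx

lemma mulVec_mem_colspan {m k : ℕ} (V : Matrix (Fin m) (Fin k) ℂ) (y : Fin k → ℂ) :
    V.mulVec y ∈ colspan V := by
  have : V.mulVec y = ∑ i, y i • Vᵀ i := by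
    ext j
    simp [Matrix.mulVec, dotProduct, Finset.sum_apply, mul_comm]
  rw [this]
  exact Submodule.sum_mem _ fun i _ =>
    Submodule.smul_mem _ _ (Submodule.subset_span ⟨i, rfl⟩)

theorem preconditioned_gmres_iterates_in_krylov (m kP j : ℕ)
    (A : Matrix (Fin m) (Fin m) ℂ) (b : Fin m → ℂ)
    (W : Matrix (Fin m) (Fin (kP + 1)) ℂ) (hW : Wᴴ * W = 1)
    (V : Matrix (Fin m) (Fin kP) ℂ) (hV : V = W.submatrix id Fin.castSucc)
    (H : Matrix (Fin (kP + 1)) (Fin kP) ℂ)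
    (hArnoldi : A * V = W * H)
    (hVspan : colspan V = krylov A b kP)
    (hWspan : colspan W = krylov A b (kP + 1))
    (M : Matrix (Fin m) (Fin m) ℂ)
    (hM : M = V * Hᴴ * Wᴴ + (1 - V * Vᴴ)) :
    ∀ i ≤ j, krylov (A * M) b i ≤ krylov A b (kP + i) := by
  have key : A * M = W * (H * Hᴴ * Wᴴ) + (A - W * (H * Vᴴ)) := by
    have h1 : A * (V * Hᴴ * Wᴴ) = W * (H * Hᴴ * Wᴴ) := by
      simp only [← Matrix.mul_assoc]; rw [hArnoldi]
    have h2 : A * (V * Vᴴ) = W * (H * Vᴴ) := by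
      simp only [← Matrix.mul_assoc]; rw [hArnoldi]
    rw [hM, Matrix.mul_add, Matrix.mul_sub, Matrix.mul_one, h1, h2]
  -- step lemma
  have hstep : ∀ s : ℕ, kP ≤ s → ∀ v ∈ krylov A b s,
      (A * M).mulVec v ∈ krylov A b (s + 1) := by
    intro s hs v hv
    have hcol : ∀ X : Matrix (Fin (kP+1)) (Fin m) ℂ,
        (W * X).mulVec v ∈ krylov A b (s + 1) := by
      intro X
      rw [← Matrix.mulVec_mulVec]
      have := mulVec_mem_colspan W (X.mulVec v)
      rw [hWspan] at this
      exact krylov_mono A b (by omega) this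
    rw [key, Matrix.add_mulVec, Matrix.sub_mulVec]
    exact Submodule.add_mem _ (hcol _)
      (Submodule.sub_mem _ (mulVec_mem_krylov_succ A b hv) (hcol _))
  have main : ∀ l : ℕ, ((A * M) ^ l).mulVec b ∈ krylov A b (kP + l + 1) := by
    intro l
    induction l with
    | zero => simpa using pow_mulVec_mem_krylov A b (k := kP + 1) (l := 0) (by omega)
    | succ n ih =>
        rw [pow_succ', ← Matrix.mulVec_mulVec]
        exact hstep (kP + n + 1) (by omega) _ ih
  intro i _
  rw [krylov]
  apply Submodule.span_le.mpr
  rintro x ⟨l, rfl⟩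
  exact krylov_mono A b (by omega) (main l)
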